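/- Let m, n be positive natural numbers with m ≤ n and m dividing n. Set A = {0, 1, ..., n} and B = {0, m, 2m, ..., n}. Then for every real x ∈ [0,1] there exist a ∈ A − A and b ∈ (B − B) \ {0} such that |x − a/b| ≤ m/(|b|·n). -/

import Mathlib

/-- Asymmetric variant of Dirichlet's approximation theorem:
for `A = {0,…,n}` and `B = {0,m,2m,…,n}` (with `m ∣ n`, `m ≤ n`), every `x ∈ [0,1]`
is approximated by a ratio `a/b` with `a ∈ A − A`, `b ∈ (B − B) \ {0}`, up to `m/(|b|·n)`. -/
theorem stmt0 (m n : ℕ) (hm : 0 < m) (hn : 0 < n) (hmn : m ≤ n) (hdvd : m ∣ n)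
    (x : ℝ) (hx : x ∈ Set.Icc (0:ℝ) 1) :
    ∃ a b : ℤ,
      (∃ a₁ a₂ : ℤ, 0 ≤ a₁ ∧ a₁ ≤ (n:ℤ) ∧ 0 ≤ a₂ ∧ a₂ ≤ (n:ℤ) ∧ a = a₁ - a₂) ∧
      (∃ b₁ b₂ : ℤ, 0 ≤ b₁ ∧ b₁ ≤ (n:ℤ) ∧ (m:ℤ) ∣ b₁ ∧
        0 ≤ b₂ ∧ b₂ ≤ (n:ℤ) ∧ (m:ℤ) ∣ b₂ ∧ b = b₁ - b₂) ∧
      b ≠ 0 ∧ |x - (a:ℝ) / (b:ℝ)| ≤ (m:ℝ) / (|(b:ℝ)| * n) := by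
  obtain ⟨hx0, hx1⟩ := hx
  set N : ℕ := n / m with hN
  have hNm : N * m = n := Nat.div_mul_cancel hdvd
  have hNpos : 0 < N := by
    rcases Nat.eq_zero_or_pos N with h | h
    · simp [h] at hNm; omega
    · exact h
  obtain ⟨j, k, hk0, hkN, hjk⟩ := Real.exists_int_int_abs_mul_sub_le ((m : ℝ) * x) hNpos
  have hmR : (0:ℝ) < m := by exact_mod_cast hm
  have hnR : (0:ℝ) < n := by exact_mod_cast hn
  have hkR : (0:ℝ) < k := by exact_mod_cast hk0
  have hNR : (0:ℝ) < N := by exact_mod_cast hNpos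
  have hb : (0:ℤ) < k * m := by positivity
  have hbn : k * (m:ℤ) ≤ n := by
    have : k * (m:ℤ) ≤ N * m := by
      apply mul_le_mul_of_nonneg_right hkN (by exact_mod_cast hm.le)
    exact this.trans_eq (by exact_mod_cast hNm)
  -- key bound
  have hkey : |(k:ℝ) * ((m:ℝ) * x) - j| ≤ 1 / (N + 1) := hjk
  have hhalf : 1 / ((N:ℝ) + 1) ≤ 1 / 2 := by
    apply one_div_le_one_div_of_le (by norm_num)
    have : (1:ℝ) ≤ N := by exact_mod_cast hNpos
    linarith
  have hkmx0 : (0:ℝ) ≤ (k:ℝ) * ((m:ℝ) * x) := by positivity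
  have hkmxn : (k:ℝ) * ((m:ℝ) * x) ≤ n := by
    have h1 : (k:ℝ) * ((m:ℝ) * x) ≤ (k:ℝ) * (m:ℝ) := by
      have := mul_le_of_le_one_right (le_of_lt hmR) hx1
      nlinarith
    have h2 : (k:ℝ) * (m:ℝ) ≤ n := by exact_mod_cast hbn
    linarith
  have habs := abs_le.mp hkey
  have hj0 : (0:ℤ) ≤ j := by
    by_contra h
    push_neg at h
    have hj1 : j ≤ -1 := by omega
    have : (j:ℝ) ≤ -1 := by exact_mod_cast hj1
    linarith [habs.2, hhalf]
  have hjn : j ≤ (n:ℤ) := by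
    by_contra h
    push_neg at h
    have : (n:ℝ) + 1 ≤ (j:ℝ) := by exact_mod_cast Int.lt_iff_add_one_le.mp h
    linarith [habs.1, hhalf]
  refine ⟨j, k * m, ⟨j, 0, hj0, hjn, le_refl 0, by exact_mod_cast hn.le, by ring⟩,
    ⟨k * m, 0, hb.le, hbn, ⟨k, mul_comm k (m:ℤ)⟩, le_refl 0, by exact_mod_cast hn.le,
      dvd_zero _, by ring⟩, by omega, ?_⟩
  have hbR : (0:ℝ) < ((k * m : ℤ) : ℝ) := by exact_mod_cast hb
  rw [abs_of_pos hbR]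
  have hbc : ((k * m : ℤ) : ℝ) = (k:ℝ) * m := by push_cast; ring
  rw [hbc]
  rw [abs_sub_comm, div_sub' (by positivity), abs_div, abs_of_pos (by positivity : (0:ℝ) < (k:ℝ)*m)]
  rw [div_le_div_iff₀ (by positivity) (by positivity)]
  have h1Nm : 1 / ((N:ℝ) + 1) ≤ (m:ℝ) / n := by
    rw [div_le_div_iff₀ (by positivity) hnR]
    have : (n:ℝ) = N * m := by exact_mod_cast hNm.symm
    nlinarith
  have hmain : |(j:ℝ) - (k:ℝ) * m * x| ≤ (m:ℝ) / n := by
    calc |(j:ℝ) - (k:ℝ) * m * x| = |(k:ℝ) * ((m:ℝ) * x) - j| := by rw [abs_sub_comm]; ring_nf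
      _ ≤ 1 / (N + 1) := hkey
      _ ≤ (m:ℝ) / n := h1Nm
  calc |(j:ℝ) - (k:ℝ) * m * x| * ((k:ℝ) * m * n) ≤ ((m:ℝ)/n) * ((k:ℝ) * m * n) := by
        apply mul_le_mul_of_nonneg_right hmain (by positivity)
    _ = (m:ℝ) * ((k:ℝ) * m) := by field_simp
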